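/- (Spherical area formula.) Let X be a diametrically regular metric space, α > 0, and μ a Borel regular measure on X admitting a countable open cover by sets of finite μ-measure. Let B ⊆ A ⊆ X be Borel sets such that S_{μ,ζ_{b,α}} covers A finely. Then θ^α(μ,·) is Borel on A, and if S^α(A) < ∞ and μ⌊A is absolutely continuous with respect to S^α⌊A, then μ(B) = ∫_B θ^α(μ,x) dS^α(x). -/

import Mathlib

open Set Metric MeasureTheory ENNReal Filter Topology

variable {X : Type*}

section Defs
variable [MetricSpace X] [MeasurableSpace X]

/-- The `δ`-approximating pre-measure `ζ_δ` of the Carathéodory construction built from a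
family of sets `S` and a size function `ζ`: the infimum of `∑_j ζ(E_j)` over countable
covers of `R` by members `E_j ∈ S` of diameter at most `δ`. -/
noncomputable def caraPre (S : Set (Set X)) (ζ : Set X → ℝ≥0∞) (δ : ℝ≥0∞) (R : Set X) : ℝ≥0∞ :=
  ⨅ (E : ℕ → Set X) (_ : ∀ n, E n ∈ S ∧ EMetric.diam (E n) ≤ δ) (_ : R ⊆ ⋃ n, E n),
    ∑' n, ζ (E n)

/-- The Carathéodory approximating measure `ψ_ζ = sup_{δ>0} ζ_δ`. -/
noncomputable def psi (S : Set (Set X)) (ζ : Set X → ℝ≥0∞) (R : Set X) : ℝ≥0∞ :=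
  ⨆ (δ : ℝ≥0∞) (_ : 0 < δ), caraPre S ζ δ R

/-- The quotient function `Q_{μ,ζ}`. -/
noncomputable def fedQuot (μ : Measure X) (ζ : Set X → ℝ≥0∞) (T : Set X) : ℝ≥0∞ :=
  if ζ T = 0 then ∞ else if ζ T = ∞ then 0 else μ T / ζ T

/-- The family `S_{μ,ζ}`: members of `S` except those on which `ζ` and `μ` both vanish or
are both infinite. -/
def adm (μ : Measure X) (S : Set (Set X)) (ζ : Set X → ℝ≥0∞) : Set (Set X) :=
  {T ∈ S | ¬ (ζ T = 0 ∧ μ T = 0) ∧ ¬ (ζ T = ∞ ∧ μ T = ∞)}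

/-- A family of sets `𝒮` covers finely at `x` (equivalently, the associated covering
relation is fine at `x`). -/
def Fine (𝒮 : Set (Set X)) (x : X) : Prop :=
  ∀ ε : ℝ≥0∞, 0 < ε → ∃ T ∈ 𝒮, x ∈ T ∧ EMetric.diam T < ε

/-- The Federer density `F^ζ(μ,x)`: the covering limsup of `Q_{μ,ζ}` over members of
`S_{μ,ζ}` containing `x` with diameter tending to `0`. -/
noncomputable def fedDensity (μ : Measure X) (S : Set (Set X)) (ζ : Set X → ℝ≥0∞) (x : X) :
    ℝ≥0∞ :=
  ⨅ (ε : ℝ≥0∞) (_ : 0 < ε),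
    ⨆ (T : Set X) (_ : T ∈ adm μ S ζ ∧ x ∈ T ∧ EMetric.diam T < ε), fedQuot μ ζ T

/-- The size function `ζ_α(T) = c_α diam(T)^α`. -/
noncomputable def sizeDiam (c : ℝ≥0∞) (α : ℝ) (T : Set X) : ℝ≥0∞ :=
  c * EMetric.diam T ^ α

/-- The enlargement `Ŝ = ⋃ {T ∈ S : T ∩ S ≠ ∅, diam T ≤ 2 diam S}`. -/
def hatSet (S : Set (Set X)) (T : Set X) : Set X :=
  ⋃₀ {U | U ∈ S ∧ (U ∩ T).Nonempty ∧ EMetric.diam U ≤ 2 * EMetric.diam T}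

/-- The doubling-type condition on the size function `ζ`: there are constants `c, η > 0`
such that every `S ∈ 𝒮` admits `S̃ ∈ 𝒮` with `Ŝ ⊆ S̃`, `diam S̃ ≤ c diam S` and
`ζ(S̃) ≤ η ζ(S)`. -/
def DoublingSize (S : Set (Set X)) (ζ : Set X → ℝ≥0∞) : Prop :=
  ∃ c η : ℝ≥0∞, 0 < c ∧ c < ∞ ∧ 0 < η ∧ η < ∞ ∧
    ∀ T ∈ S, ∃ T' ∈ S, hatSet S T ⊆ T' ∧
      EMetric.diam T' ≤ c * EMetric.diam T ∧ ζ T' ≤ η * ζ T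

end Defs

/-- The family of all closed balls (with positive radius) of a metric space. -/
def closedBallsF (X : Type*) [MetricSpace X] : Set (Set X) :=
  {T | ∃ (x : X) (r : ℝ), 0 < r ∧ T = Metric.closedBall x r}

/-- The family of all closed subsets of a metric space. -/
def closedSetsF (X : Type*) [MetricSpace X] : Set (Set X) := {T | IsClosed T}

section DefsM
variable [MetricSpace X] [MeasurableSpace X]

/-- A (outer) measure `μ` is Borel regular if every set is contained in a Borel set of the
same measure. -/
def BorelRegular (μ : Measure X) : Prop :=
  ∀ A : Set X, ∃ B : Set X, MeasurableSet B ∧ A ⊆ B ∧ μ A = μ B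

/-- There exists a countable open cover of `X` whose elements have finite `μ`-measure. -/
def SigmaFiniteOpen (μ : Measure X) : Prop :=
  ∃ U : ℕ → Set X, (∀ n, IsOpen (U n)) ∧ (⋃ n, U n) = univ ∧ ∀ n, μ (U n) < ∞

/- The Carathéodory-construction measure `ψ_ζ` as a Borel measure, via the metric
construction (sets outside the family `S` are given infinite size). -/
open Classical in
noncomputable def psiM [MeasurableSpace X] [BorelSpace X] (S : Set (Set X))
    (ζ : Set X → ℝ≥0∞) : Measure X :=
  Measure.mkMetric' (fun T => if T ∈ S then ζ T else ∞)

/-- The upper (centered) spherical density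
`Θ^{*α}(μ,x) = limsup_{r→0⁺} μ(B̄(x,r))/(c_α (2r)^α)`. -/
noncomputable def upperSphDensity (μ : Measure X) (c : ℝ≥0∞) (α : ℝ) (x : X) : ℝ≥0∞ :=
  Filter.limsup
    (fun r : ℝ => μ (Metric.closedBall x r) / (c * ENNReal.ofReal (2 * r) ^ α)) (𝓝[>] 0)

/-- `X` is diametrically regular: for all `x ∈ X`, `R > 0` there is `δ > 0` such that
`t ↦ diam B(y,t)` is continuous on `(0,δ)` for every `y ∈ B̄(x,R)`. -/
def DiamRegular (X : Type*) [MetricSpace X] : Prop :=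
  ∀ x : X, ∀ R > (0:ℝ), ∃ δ > (0:ℝ), ∀ y ∈ Metric.closedBall x R,
    ContinuousOn (fun t : ℝ => Metric.diam (Metric.ball y t)) (Ioo 0 δ)

end DefsM



/-! ### Auxiliary lemmas for the proof -/

section Aux

variable [MetricSpace X]

namespace Stmt9

/-- Any closed ball with positive diameter can be represented with a radius at most twice
its diameter. -/
theorem ball_repr {T : Set X} (hT : T ∈ closedBallsF X) (hd : EMetric.diam T ≠ 0) :
    ∃ z s, 0 < s ∧ T = Metric.closedBall z s ∧ ENNReal.ofReal s ≤ 2 * EMetric.diam T := by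
  obtain ⟨z, r, hr, rfl⟩ := hT
  have hbd : Bornology.IsBounded (Metric.closedBall z r) := Metric.isBounded_closedBall
  have hzmem : z ∈ Metric.closedBall z r := Metric.mem_closedBall_self hr.le
  have hne : EMetric.diam (Metric.closedBall z r) ≠ ⊤ := hbd.ediam_ne_top
  have hdiam : EMetric.diam (Metric.closedBall z r)
      = ENNReal.ofReal (Metric.diam (Metric.closedBall z r)) := by
    rw [Metric.diam]; exact (ENNReal.ofReal_toReal hne).symm
  set d := Metric.diam (Metric.closedBall z r) with hdd
  have hd0 : 0 < d := by
    rcases lt_or_eq_of_le (Metric.diam_nonneg (s := Metric.closedBall z r)) with h | h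
    · exact h
    · exact absurd (by rw [hdiam, hdd, ← h, ENNReal.ofReal_zero]) hd
  rcases le_or_gt r (2 * d) with hcase | hcase
  · refine ⟨z, r, hr, rfl, ?_⟩
    calc ENNReal.ofReal r ≤ ENNReal.ofReal (2 * d) := ENNReal.ofReal_le_ofReal hcase
      _ = 2 * EMetric.diam (Metric.closedBall z r) := by
          rw [hdiam, ENNReal.ofReal_mul (by norm_num), ENNReal.ofReal_ofNat]
  · refine ⟨z, 2 * d, by positivity, ?_, ?_⟩
    · apply Subset.antisymm
      · intro w hw
        have := Metric.dist_le_diam_of_mem hbd hw hzmem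
        exact Metric.mem_closedBall.2 (this.trans (by linarith))
      · intro w hw
        exact Metric.mem_closedBall.2 ((Metric.mem_closedBall.1 hw).trans hcase.le)
    · rw [hdiam, ENNReal.ofReal_mul (by norm_num), ENNReal.ofReal_ofNat]

theorem ediam_ofReal {s : Set X} (h : Bornology.IsBounded s) :
    EMetric.diam s = ENNReal.ofReal (Metric.diam s) := by
  rw [Metric.diam]; exact (ENNReal.ofReal_toReal h.ediam_ne_top).symm

/-- From continuity of `t ↦ diam (ball z t)`, slightly enlarging the radius of a closed
ball increases the diameter by an arbitrarily small amount. -/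
theorem diam_enlarge {z : X} {s δ ρ : ℝ} (hs : s ∈ Ioo (0:ℝ) δ) (hρ : 0 < ρ)
    (hcont : ContinuousOn (fun t : ℝ => Metric.diam (Metric.ball z t)) (Ioo 0 δ)) :
    ∃ h > 0, s + h < δ ∧
      Metric.diam (Metric.closedBall z (s + h)) ≤ Metric.diam (Metric.closedBall z s) + ρ := by
  set g : ℝ → ℝ := fun t => Metric.diam (Metric.ball z t) with hg
  have hca : ContinuousAt g s := hcont.continuousAt (Ioo_mem_nhds hs.1 hs.2)
  have hev : ∀ᶠ t in 𝓝 s, g t < g s + ρ :=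
    hca.eventually_lt continuousAt_const (by linarith)
  obtain ⟨η, hη, hball⟩ := Metric.eventually_nhds_iff_ball.1 hev
  set h₀ := min η (δ - s) with hh₀
  have hh₀pos : 0 < h₀ := lt_min hη (by linarith [hs.2])
  refine ⟨h₀ / 4, by positivity, ?_, ?_⟩
  · have : h₀ ≤ δ - s := min_le_right _ _
    linarith
  · have h1 : Metric.closedBall z (s + h₀ / 4) ⊆ Metric.ball z (s + h₀ / 2) :=
      Metric.closedBall_subset_ball (by linarith)
    have h2 : s + h₀ / 2 ∈ Metric.ball s η := by
      simp only [Metric.mem_ball, Real.dist_eq]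
      rw [abs_of_nonneg (by linarith)]
      have : h₀ ≤ η := min_le_left _ _
      linarith
    have h3 : g (s + h₀ / 2) < g s + ρ := hball _ h2
    have h4 : Metric.diam (Metric.closedBall z (s + h₀ / 4)) ≤ g (s + h₀ / 2) :=
      Metric.diam_mono h1 Metric.isBounded_ball
    have h5 : g s ≤ Metric.diam (Metric.closedBall z s) :=
      Metric.diam_mono Metric.ball_subset_closedBall Metric.isBounded_closedBall
    linarith

/-- `EMetric` version of `diam_enlarge`. -/
theorem ediam_enlarge {z : X} {s δ ρ : ℝ} (hs : s ∈ Ioo (0:ℝ) δ) (hρ : 0 < ρ)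
    (hcont : ContinuousOn (fun t : ℝ => Metric.diam (Metric.ball z t)) (Ioo 0 δ)) :
    ∃ h > 0, s + h < δ ∧
      EMetric.diam (Metric.closedBall z (s + h))
        ≤ EMetric.diam (Metric.closedBall z s) + ENNReal.ofReal ρ := by
  obtain ⟨h, hh, hδ, hle⟩ := diam_enlarge hs hρ hcont
  refine ⟨h, hh, hδ, ?_⟩
  have hb1 : EMetric.diam (Metric.closedBall z (s + h)) ≠ ⊤ :=
    Metric.isBounded_closedBall.ediam_ne_top
  have hb2 : EMetric.diam (Metric.closedBall z s) ≠ ⊤ :=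
    Metric.isBounded_closedBall.ediam_ne_top
  calc EMetric.diam (Metric.closedBall z (s + h))
      = ENNReal.ofReal (Metric.diam (Metric.closedBall z (s + h))) := by
        rw [Metric.diam]; exact (ENNReal.ofReal_toReal hb1).symm
    _ ≤ ENNReal.ofReal (Metric.diam (Metric.closedBall z s) + ρ) :=
        ENNReal.ofReal_le_ofReal hle
    _ ≤ EMetric.diam (Metric.closedBall z s) + ENNReal.ofReal ρ := by
        rw [ENNReal.ofReal_add Metric.diam_nonneg hρ.le, Metric.diam]
        exact le_of_eq (congrArg (· + ENNReal.ofReal ρ) (ENNReal.ofReal_toReal hb2))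

end Stmt9

end Aux


section Aux2

variable [MetricSpace X] [MeasurableSpace X]

namespace Stmt9

/-- The inner supremum in the definition of the Federer density. -/
noncomputable def supQ (μ : Measure X) (c : ℝ≥0∞) (α : ℝ) (ε : ℝ≥0∞) (x : X) : ℝ≥0∞ :=
  ⨆ (T : Set X) (_ : T ∈ adm μ (closedBallsF X) (sizeDiam c α) ∧ x ∈ T ∧
      EMetric.diam T < ε), fedQuot μ (sizeDiam c α) T

theorem fedDensity_eq (μ : Measure X) (c : ℝ≥0∞) (α : ℝ) (x : X) :
    fedDensity μ (closedBallsF X) (sizeDiam c α) x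
      = ⨅ (ε : ℝ≥0∞) (_ : 0 < ε), supQ μ c α ε x := rfl

theorem supQ_mono (μ : Measure X) (c : ℝ≥0∞) (α : ℝ) {ε ε' : ℝ≥0∞} (h : ε ≤ ε') (x : X) :
    supQ μ c α ε x ≤ supQ μ c α ε' x := by
  refine iSup_le fun T => iSup_le fun hT => ?_
  exact le_iSup₂ (f := fun (T' : Set X) (_ : T' ∈ adm μ (closedBallsF X) (sizeDiam c α) ∧
    x ∈ T' ∧ EMetric.diam T' < ε') => fedQuot μ (sizeDiam c α) T') T
    ⟨hT.1, hT.2.1, hT.2.2.trans_le h⟩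

theorem fedDensity_le_supQ (μ : Measure X) (c : ℝ≥0∞) (α : ℝ) {ε : ℝ≥0∞} (hε : 0 < ε)
    (x : X) : fedDensity μ (closedBallsF X) (sizeDiam c α) x ≤ supQ μ c α ε x :=
  iInf₂_le ε hε

theorem lt_supQ_iff {μ : Measure X} {c : ℝ≥0∞} {α : ℝ} {ε : ℝ≥0∞} {x : X} {t : ℝ≥0∞} :
    t < supQ μ c α ε x ↔ ∃ T, (T ∈ adm μ (closedBallsF X) (sizeDiam c α) ∧ x ∈ T ∧
      EMetric.diam T < ε) ∧ t < fedQuot μ (sizeDiam c α) T := by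
  simp [supQ, lt_iSup_iff]

/-- If `T` is admissible with `x ∈ T` and `μ {x} = 0`, then `T` has positive diameter. -/
theorem diam_pos_of_adm {μ : Measure X} {c : ℝ≥0∞} {α : ℝ} (hα : 0 < α) {x : X} {T : Set X}
    (hT : T ∈ adm μ (closedBallsF X) (sizeDiam c α)) (hx : x ∈ T) (hxa : μ {x} = 0) :
    EMetric.diam T ≠ 0 := by
  intro h0
  have hTx : T = {x} := by
    apply Subset.antisymm
    · intro w hw
      have : edist w x ≤ EMetric.diam T := EMetric.edist_le_diam_of_mem hw hx
      rw [h0, le_zero_iff, edist_eq_zero] at this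
      exact this ▸ rfl
    · simpa using hx
  have hζ : sizeDiam c α T = 0 := by
    simp [sizeDiam, h0, ENNReal.zero_rpow_of_pos hα]
  exact hT.2.1 ⟨hζ, by rw [hTx]; exact hxa⟩

/-- Key lower-semicontinuity-type lemma: near a non-atom `x` in the region where the
diameter of balls varies continuously, `supQ` being large at `x` forces it to be large on
a neighbourhood. -/
theorem exists_nhds_supQ_gt {μ : Measure X} {c : ℝ≥0∞} {α : ℝ}
    (hα : 0 < α) (hc : 0 < c) (hc' : c < ∞)
    {x₀ : X} {δ₀ : ℝ} (hδ₀ : 0 < δ₀)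
    (hcont : ∀ y ∈ Metric.closedBall x₀ 1,
      ContinuousOn (fun t : ℝ => Metric.diam (Metric.ball y t)) (Ioo 0 δ₀))
    {εr : ℝ} (hεr : 0 < εr) (hεr1 : εr ≤ δ₀ / 4) (hεr2 : εr ≤ 8⁻¹)
    {x : X} (hx : x ∈ Metric.ball x₀ (2⁻¹ : ℝ)) (hxa : μ {x} = 0)
    {t : ℝ≥0∞} (ht : t < supQ μ c α (ENNReal.ofReal εr) x) :
    ∃ h > (0:ℝ), ∀ x' ∈ Metric.ball x h, t < supQ μ c α (ENNReal.ofReal εr) x' := by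
  obtain ⟨T, ⟨hTadm, hxT, hTdiam⟩, hQ⟩ := lt_supQ_iff.1 ht
  have htne : t ≠ ⊤ := hQ.ne_top
  set ε : ℝ≥0∞ := ENNReal.ofReal εr with hεdef
  have hεtop : ε ≠ ⊤ := ENNReal.ofReal_ne_top
  set de : ℝ≥0∞ := EMetric.diam T with hde
  have hde0 : de ≠ 0 := diam_pos_of_adm hα hTadm hxT hxa
  have hdetop : de ≠ ⊤ := (hTdiam.trans_le le_top).ne
  -- the size of `T` is finite and positive
  have hζ0 : sizeDiam c α T ≠ 0 := by
    rw [sizeDiam, ← hde]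
    exact mul_ne_zero hc.ne' (ENNReal.rpow_pos hde0.bot_lt hdetop).ne'
  have hζtop : sizeDiam c α T ≠ ⊤ := by
    rw [sizeDiam, ← hde]
    exact ENNReal.mul_ne_top hc'.ne (ENNReal.rpow_lt_top_of_nonneg hα.le hdetop).ne
  rw [fedQuot, if_neg hζ0, if_neg hζtop] at hQ
  have hμT : t * sizeDiam c α T < μ T := by
    rcases eq_or_ne (μ T) ⊤ with h | h
    · rw [h]
      exact ENNReal.mul_lt_top (htne.lt_top) (hζtop.lt_top)
    · exact (ENNReal.lt_div_iff_mul_lt (Or.inl hζ0) (Or.inl hζtop)).1 hQ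
  have hμT0 : 0 < μ T := by
    rcases eq_or_ne (μ T) 0 with h | h
    · rw [h] at hμT; exact absurd hμT (by simp)
    · exact pos_iff_ne_zero.2 h
  -- choose the slack `ρ`
  have hkey : ∃ ρ : ℝ, 0 < ρ ∧ de + ENNReal.ofReal ρ < ε ∧
      t * (c * (de + ENNReal.ofReal ρ) ^ α) < μ T := by
    have htend : Filter.Tendsto (fun n : ℕ => de + (n : ℝ≥0∞)⁻¹) atTop (𝓝 de) := by
      simpa using (tendsto_const_nhds (x := de)).add ENNReal.tendsto_inv_nat_nhds_zero
    have hG : Continuous fun D : ℝ≥0∞ => t * (c * D ^ α) := by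
      have : Continuous fun D : ℝ≥0∞ => D ^ α := ENNReal.continuous_rpow_const
      have h2 : (fun D : ℝ≥0∞ => t * (c * D ^ α)) = fun D => (t * c) * D ^ α := by
        ext D; ring
      rw [h2]
      exact (ENNReal.continuous_const_mul (ENNReal.mul_ne_top htne hc'.ne)).comp this
    have h1 : ∀ᶠ n : ℕ in atTop, de + (n : ℝ≥0∞)⁻¹ < ε := htend.eventually_lt_const hTdiam
    have h2 : ∀ᶠ n : ℕ in atTop, t * (c * (de + (n : ℝ≥0∞)⁻¹) ^ α) < μ T := by
      have := (hG.tendsto de).comp htend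
      have hlim : t * (c * de ^ α) < μ T := by simpa [sizeDiam, hde] using hμT
      exact this.eventually_lt_const hlim
    obtain ⟨n, hn1, hn2⟩ := (h1.and h2).exists
    have hcast : ENNReal.ofReal (((n:ℝ) + 1)⁻¹) ≤ (n : ℝ≥0∞)⁻¹ := by
      rw [ENNReal.ofReal_inv_of_pos (by positivity)]
      refine ENNReal.inv_le_inv' ?_
      calc (n : ℝ≥0∞) ≤ (n : ℝ≥0∞) + 1 := le_self_add
        _ = ENNReal.ofReal ((n:ℝ) + 1) := by
            rw [ENNReal.ofReal_add (by positivity) zero_le_one, ENNReal.ofReal_natCast,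
              ENNReal.ofReal_one]
    refine ⟨((n:ℝ) + 1)⁻¹, by positivity, ?_, ?_⟩
    · exact lt_of_le_of_lt (add_le_add_right hcast de) hn1
    · refine lt_of_le_of_lt ?_ hn2
      exact mul_le_mul_right (mul_le_mul_right
        (ENNReal.rpow_le_rpow (add_le_add_right hcast de) hα.le) _) _
  obtain ⟨ρ, hρ, hρ1, hρ2⟩ := hkey
  -- representation of `T` with controlled radius
  obtain ⟨z, s, hs, hTz, hsle⟩ := ball_repr hTadm.1 hde0
  have hsεr : s ≤ 2 * εr := by
    have : ENNReal.ofReal s ≤ ENNReal.ofReal (2 * εr) := by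
      refine hsle.trans ?_
      rw [ENNReal.ofReal_mul (by norm_num), ENNReal.ofReal_ofNat]
      exact mul_le_mul_right hTdiam.le _
    exact (ENNReal.ofReal_le_ofReal_iff (by positivity)).1 this
  have hzx : dist x z ≤ s := by rw [hTz] at hxT; exact hxT
  have hzball : z ∈ Metric.closedBall x₀ 1 := by
    have h1 : dist z x₀ ≤ dist z x + dist x x₀ := dist_triangle _ _ _
    have h2 : dist x x₀ < 2⁻¹ := hx
    have h3 : dist z x ≤ s := by rw [dist_comm]; exact hzx
    have : dist z x₀ ≤ 2 * εr + 2⁻¹ := by linarith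
    refine Metric.mem_closedBall.2 (this.trans ?_)
    have : εr ≤ 8⁻¹ := hεr2
    norm_num
    linarith
  have hsδ : s ∈ Ioo (0:ℝ) δ₀ := by
    constructor
    · exact hs
    · have : (2:ℝ) * εr ≤ δ₀ / 2 := by linarith
      linarith
  obtain ⟨h, hh, hhδ, hdle⟩ := ediam_enlarge hsδ hρ (hcont z hzball)
  -- the enlarged ball
  set Tp : Set X := Metric.closedBall z (s + h) with hTp
  have hdTp : EMetric.diam Tp ≤ de + ENNReal.ofReal ρ := by rw [hTp, hde, hTz]; exact hdle
  have hdTpε : EMetric.diam Tp < ε := lt_of_le_of_lt hdTp hρ1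
  have hdTptop : EMetric.diam Tp ≠ ⊤ := (hdTpε.trans_le le_top).ne
  have hTsub : T ⊆ Tp := by
    rw [hTz, hTp]
    exact Metric.closedBall_subset_closedBall (by linarith)
  have hμTp : 0 < μ Tp := hμT0.trans_le (measure_mono hTsub)
  have hζTp_top : sizeDiam c α Tp ≠ ⊤ := by
    rw [sizeDiam]
    exact ENNReal.mul_ne_top hc'.ne (ENNReal.rpow_lt_top_of_nonneg hα.le hdTptop).ne
  have hTpadm : Tp ∈ adm μ (closedBallsF X) (sizeDiam c α) := by
    refine ⟨⟨z, s + h, by linarith, rfl⟩, ?_, ?_⟩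
    · rintro ⟨-, h'⟩; exact hμTp.ne' h'
    · rintro ⟨h', -⟩; exact hζTp_top h'
  have hQp : t < fedQuot μ (sizeDiam c α) Tp := by
    rcases eq_or_ne (sizeDiam c α Tp) 0 with h' | h'
    · rw [fedQuot, if_pos h']
      exact htne.lt_top
    · rw [fedQuot, if_neg h', if_neg hζTp_top]
      refine (ENNReal.lt_div_iff_mul_lt (Or.inl h') (Or.inl hζTp_top)).2 ?_
      calc t * sizeDiam c α Tp ≤ t * (c * (de + ENNReal.ofReal ρ) ^ α) := by
            refine mul_le_mul_right ?_ _
            exact mul_le_mul_right (ENNReal.rpow_le_rpow hdTp hα.le) _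
        _ < μ T := hρ2
        _ ≤ μ Tp := measure_mono hTsub
  refine ⟨h, hh, fun x' hx' => ?_⟩
  have hx'Tp : x' ∈ Tp := by
    rw [hTp]
    refine Metric.mem_closedBall.2 ?_
    calc dist x' z ≤ dist x' x + dist x z := dist_triangle _ _ _
      _ ≤ h + s := by
          have := Metric.mem_ball.1 hx'
          linarith
      _ = s + h := by ring
  exact lt_supQ_iff.2 ⟨Tp, ⟨hTpadm, hx'Tp, hdTpε⟩, hQp⟩

end Stmt9

end Aux2


section Aux3

variable [MetricSpace X]

namespace Stmt9

theorem ofReal_inv_nat_succ_le (n : ℕ) :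
    ENNReal.ofReal (((n:ℝ) + 1)⁻¹) ≤ (n : ℝ≥0∞)⁻¹ := by
  rw [ENNReal.ofReal_inv_of_pos (by positivity)]
  refine ENNReal.inv_le_inv' ?_
  calc (n : ℝ≥0∞) ≤ (n : ℝ≥0∞) + 1 := le_self_add
    _ = ENNReal.ofReal ((n:ℝ) + 1) := by
        rw [ENNReal.ofReal_add (by positivity) zero_le_one, ENNReal.ofReal_natCast,
          ENNReal.ofReal_one]

variable [MeasurableSpace X] [BorelSpace X]

/-- A set which is locally a countable union of closed sets modulo a fixed countable set is
measurable. -/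
theorem measurableSet_of_locally {ι : Type*} [Countable ι] {S D : Set X} (hD : D.Countable)
    (h : ∀ x : X, ∃ W : Set X, IsOpen W ∧ x ∈ W ∧ ∃ C : ι → Set X,
      (∀ i, IsClosed (C i)) ∧ (∀ i, C i ∩ W ⊆ S ∪ D) ∧ S ∩ W ⊆ (⋃ i, C i) ∪ D) :
    MeasurableSet S := by
  choose W hWo hWx C hCcl hCsub hScov using h
  obtain ⟨v, hvo, hvU, hvlf, hvW⟩ := precise_refinement W hWo (by
    rw [eq_univ_iff_forall]; exact fun x => mem_iUnion.2 ⟨x, hWx x⟩)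
  set K : X → ℕ → Set X := fun x m => {y | (m : ℝ≥0∞)⁻¹ ≤ EMetric.infEdist y (v x)ᶜ} with hK
  have hKcl : ∀ x m, IsClosed (K x m) := fun x m =>
    isClosed_le continuous_const EMetric.continuous_infEdist
  have hKsub : ∀ x m, K x m ⊆ v x := by
    intro x m y hy
    by_contra hyv
    have h0 : EMetric.infEdist y (v x)ᶜ = 0 := EMetric.infEdist_zero_of_mem hyv
    have : (m:ℝ≥0∞)⁻¹ = 0 := le_antisymm (h0 ▸ hy) zero_le
    exact (ENNReal.inv_ne_zero.2 (ENNReal.natCast_ne_top m)) this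
  have hKun : ∀ x, v x ⊆ ⋃ m, K x m := by
    intro x y hy
    have hpos : 0 < EMetric.infEdist y (v x)ᶜ := by
      rw [EMetric.infEdist, EMetric.infEdist_pos_iff_notMem_closure, (hvo x).isClosed_compl.closure_eq]
      simpa using hy
    obtain ⟨m, hm⟩ := ENNReal.exists_inv_nat_lt hpos.ne'
    exact mem_iUnion.2 ⟨m, hm.le⟩
  set F : Set X := ⋃ p : ι × ℕ, ⋃ x, C x p.1 ∩ K x p.2 with hF
  have hFmeas : MeasurableSet F := by
    refine MeasurableSet.iUnion fun p => ?_
    have hlf : LocallyFinite fun x => C x p.1 ∩ K x p.2 :=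
      hvlf.subset fun x => inter_subset_right.trans (hKsub x p.2)
    exact (hlf.isClosed_iUnion fun x => (hCcl x p.1).inter (hKcl x p.2)).measurableSet
  have hFS : F ⊆ S ∪ D := by
    intro y hy
    simp only [hF, mem_iUnion] at hy
    obtain ⟨⟨i, m⟩, x, hyC, hyK⟩ := hy
    exact hCsub x i ⟨hyC, hvW x (hKsub x m hyK)⟩
  have hSF : S ⊆ F ∪ D := by
    intro y hy
    obtain ⟨x, hx⟩ : ∃ x, y ∈ v x := mem_iUnion.1 (hvU ▸ mem_univ y)
    rcases hScov x ⟨hy, hvW x hx⟩ with hC | hD'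
    · obtain ⟨i, hi⟩ := mem_iUnion.1 hC
      obtain ⟨m, hm⟩ := mem_iUnion.1 (hKun x hx)
      exact Or.inl (mem_iUnion.2 ⟨(i, m), mem_iUnion.2 ⟨x, hi, hm⟩⟩)
    · exact Or.inr hD'
  have hrepr : S = (F \ (F \ S)) ∪ (S \ F) := by
    ext y; constructor
    · intro hy
      by_cases hyF : y ∈ F
      · exact Or.inl ⟨hyF, fun hc => hc.2 hy⟩
      · exact Or.inr ⟨hy, hyF⟩
    · rintro (⟨h1, h2⟩ | ⟨h1, -⟩)
      · by_contra hc; exact h2 ⟨h1, hc⟩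
      · exact h1
  rw [hrepr]
  have hds1 : (F \ S).Countable := hD.mono fun y hy => (hFS hy.1).resolve_left hy.2
  have hds2 : (S \ F).Countable := hD.mono fun y hy => (hSF hy.1).resolve_left hy.2
  exact (hFmeas.diff hds1.measurableSet).union hds2.measurableSet

/-- A `σ`-finite measure has countably many atoms. -/
theorem countable_atoms (μ : Measure X) (hσ : SigmaFiniteOpen μ) :
    {x : X | μ {x} ≠ 0}.Countable := by
  obtain ⟨U, hUo, hUun, hUfin⟩ := hσ
  have hn : ∀ n, {x : X | x ∈ U n ∧ μ {x} ≠ 0}.Countable := by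
    intro n
    have hcnt := MeasureTheory.Measure.countable_meas_pos_of_disjoint_of_meas_iUnion_ne_top₀
      (μ := μ) (As := fun x : X => {x} ∩ U n)
      (fun x => ((measurableSet_singleton x).inter (hUo n).measurableSet).nullMeasurableSet)
      (fun x y hxy => Disjoint.aedisjoint (by
        refine Set.disjoint_left.2 ?_
        rintro z ⟨hz1, -⟩ ⟨hz2, -⟩
        exact hxy ((mem_singleton_iff.1 hz1).symm.trans (mem_singleton_iff.1 hz2))))
      (by
        refine ne_top_of_le_ne_top (hUfin n).ne (measure_mono ?_)
        simp only [iUnion_subset_iff]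
        exact fun x => inter_subset_right)
    refine hcnt.mono ?_
    rintro x ⟨hxU, hx⟩
    have hxx : ({x} : Set X) ∩ U n = {x} := by rwa [inter_eq_left, singleton_subset_iff]
    simp only [mem_setOf_eq, hxx]
    exact pos_iff_ne_zero.2 hx
  have hsub : {x : X | μ {x} ≠ 0} ⊆ ⋃ n, {x | x ∈ U n ∧ μ {x} ≠ 0} := by
    intro x hx
    have : x ∈ ⋃ n, U n := hUun ▸ mem_univ x
    obtain ⟨n, hn'⟩ := mem_iUnion.1 this
    exact mem_iUnion.2 ⟨n, hn', hx⟩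
  exact (Set.countable_iUnion hn).mono hsub

/-- The Federer density is a Borel function. -/
theorem measurable_fedDensity {μ : Measure X} {c : ℝ≥0∞} {α : ℝ}
    (hXreg : DiamRegular X) (hα : 0 < α) (hc : 0 < c) (hc' : c < ∞)
    (hσ : SigmaFiniteOpen μ) :
    Measurable (fedDensity μ (closedBallsF X) (sizeDiam c α)) := by
  apply measurable_of_Iio
  intro t
  rcases eq_or_ne t 0 with rfl | ht0
  · convert MeasurableSet.empty
    ext y; simp
  set D := {x : X | μ {x} ≠ 0} with hDdef
  have hD : D.Countable := countable_atoms μ hσ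
  apply measurableSet_of_locally (ι := ℕ × ℚ) hD
  intro x₀
  obtain ⟨δ₀, hδ₀, hδcont⟩ := hXreg x₀ 1 one_pos
  set b := min (δ₀ / 4) (8⁻¹ : ℝ) with hb
  have hbpos : 0 < b := lt_min (by linarith) (by norm_num)
  set εr : ℕ → ℝ := fun k => b / (k + 1) with hεrdef
  have hεrpos : ∀ k, 0 < εr k := fun k => by positivity
  have hεr1 : ∀ k, εr k ≤ δ₀ / 4 := fun k => by
    refine le_trans ?_ (min_le_left (δ₀/4) (8⁻¹:ℝ))
    rw [hεrdef]
    exact div_le_self hbpos.le (by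
      have : (0:ℝ) ≤ (k:ℝ) := Nat.cast_nonneg k
      linarith)
  have hεr2 : ∀ k, εr k ≤ 8⁻¹ := fun k => by
    refine le_trans ?_ (min_le_right (δ₀/4) (8⁻¹:ℝ))
    rw [hεrdef]
    exact div_le_self hbpos.le (by
      have : (0:ℝ) ≤ (k:ℝ) := Nat.cast_nonneg k
      linarith)
  refine ⟨Metric.ball x₀ 2⁻¹, Metric.isOpen_ball, Metric.mem_ball_self (by norm_num), ?_⟩
  set O : ℕ → ℚ → Set X := fun k q => {y | ∃ h > (0:ℝ), ∀ y' ∈ Metric.ball y h,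
    ENNReal.ofReal q < supQ μ c α (ENNReal.ofReal (εr k)) y'} with hO
  have hOopen : ∀ k q, IsOpen (O k q) := by
    intro k q
    rw [Metric.isOpen_iff]
    rintro y ⟨h, hh, hy⟩
    refine ⟨h/2, by linarith, ?_⟩
    intro y' hy'
    refine ⟨h/2, by linarith, fun y'' hy'' => hy y'' ?_⟩
    calc dist y'' y ≤ dist y'' y' + dist y' y := dist_triangle _ _ _
      _ < h/2 + h/2 := add_lt_add hy'' hy'
      _ = h := by ring
  classical
  refine ⟨fun p => if 0 ≤ (p.2:ℝ) ∧ ENNReal.ofReal (p.2:ℝ) < t then (O p.1 p.2)ᶜ else ∅,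
    ?_, ?_, ?_⟩
  · intro p
    dsimp only
    split
    · exact (hOopen _ _).isClosed_compl
    · exact isClosed_empty
  · rintro ⟨k, q⟩ y ⟨hyC, hyW⟩
    by_cases hyD : y ∈ D
    · exact Or.inr hyD
    dsimp only at hyC
    by_cases hcond : 0 ≤ (q:ℝ) ∧ ENNReal.ofReal (q:ℝ) < t
    swap
    · rw [if_neg hcond] at hyC; exact absurd hyC (notMem_empty y)
    rw [if_pos hcond] at hyC
    left
    have hnotD : μ {y} = 0 := by
      by_contra hcontra
      exact hyD hcontra
    have hsup : supQ μ c α (ENNReal.ofReal (εr k)) y ≤ ENNReal.ofReal (q:ℝ) := by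
      by_contra hgt
      push_neg at hgt
      obtain ⟨h, hh, hball⟩ := exists_nhds_supQ_gt hα hc hc' hδ₀ hδcont (hεrpos k)
        (hεr1 k) (hεr2 k) hyW hnotD hgt
      exact hyC ⟨h, hh, hball⟩
    have : fedDensity μ (closedBallsF X) (sizeDiam c α) y < t :=
      lt_of_le_of_lt ((fedDensity_le_supQ μ c α
        (ENNReal.ofReal_pos.2 (hεrpos k)) y).trans hsup) hcond.2
    exact this
  · rintro y ⟨hyS, hyW⟩
    have h' : (⨅ (ε : ℝ≥0∞) (_ : 0 < ε), supQ μ c α ε y) < t := hyS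
    rw [iInf_lt_iff] at h'
    obtain ⟨ε, h'⟩ := h'
    rw [iInf_lt_iff] at h'
    obtain ⟨hε, h'⟩ := h'
    obtain ⟨n, hn⟩ := ENNReal.exists_inv_nat_lt hε.ne'
    obtain ⟨k, hk⟩ := exists_nat_ge (b * ((n:ℝ) + 1))
    have hεk : ENNReal.ofReal (εr k) ≤ ε := by
      refine le_trans ?_ hn.le
      refine le_trans ?_ (ofReal_inv_nat_succ_le n)
      refine ENNReal.ofReal_le_ofReal ?_
      show b / ((k:ℝ) + 1) ≤ ((n:ℝ) + 1)⁻¹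
      rw [div_le_iff₀ (by positivity), inv_mul_eq_div, le_div_iff₀ (by positivity)]
      calc b * ((n:ℝ) + 1) ≤ (k:ℝ) := hk
        _ ≤ (k:ℝ) + 1 := by linarith
    have h2 : supQ μ c α (ENNReal.ofReal (εr k)) y < t :=
      lt_of_le_of_lt (supQ_mono μ c α hεk y) h'
    obtain ⟨q, hq0, hq1, hq2⟩ := ENNReal.lt_iff_exists_rat_btwn.1 h2
    left
    refine mem_iUnion.2 ⟨(k, q), ?_⟩
    dsimp only
    rw [if_pos ⟨(by exact_mod_cast hq0 : (0:ℝ) ≤ (q:ℝ)), hq2⟩, mem_compl_iff]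
    intro hyO
    obtain ⟨h, hh, hball⟩ := hyO
    exact absurd (hball y (Metric.mem_ball_self hh)) (not_lt.2 hq1.le)

end Stmt9

end Aux3


section Aux4

variable [MetricSpace X]

namespace Stmt9

open Classical in
/-- The gauge used in the Carathéodory construction of `psiM`. -/
noncomputable def mfun (c : ℝ≥0∞) (α : ℝ) : Set X → ℝ≥0∞ :=
  fun T => if T ∈ closedBallsF X then sizeDiam c α T else ∞

/-- The outer pre-measure at scale `r`. -/
noncomputable def preO (c : ℝ≥0∞) (α : ℝ) (r : ℝ≥0∞) : OuterMeasure X :=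
  OuterMeasure.mkMetric'.pre (mfun c α) r

/-- The Carathéodory outer measure. -/
noncomputable def psiO (c : ℝ≥0∞) (α : ℝ) : OuterMeasure X :=
  OuterMeasure.mkMetric' (mfun c α)

variable {c : ℝ≥0∞} {α : ℝ}

theorem psiM_eq [MeasurableSpace X] [BorelSpace X] :
    psiM (closedBallsF X) (sizeDiam c α) = Measure.mkMetric' (mfun (X := X) c α) := rfl

theorem psiM_apply [MeasurableSpace X] [BorelSpace X] {E : Set X} (hE : MeasurableSet E) :
    psiM (closedBallsF X) (sizeDiam c α) E = psiO c α E := by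
  rw [psiM_eq]
  exact MeasureTheory.toMeasure_apply _ _ hE

theorem preO_le_psiO {r : ℝ≥0∞} (hr : 0 < r) (E : Set X) :
    preO c α r E ≤ psiO c α E := by
  have h : OuterMeasure.mkMetric'.pre (mfun (X := X) c α) r
      ≤ OuterMeasure.mkMetric' (mfun c α) :=
    le_iSup₂ (f := fun (r' : ℝ≥0∞) (_ : 0 < r') =>
      OuterMeasure.mkMetric'.pre (mfun (X := X) c α) r') r hr
  exact h E

theorem preO_le_sizeDiam {r : ℝ≥0∞} {T : Set X} (hT : T ∈ closedBallsF X)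
    (hd : EMetric.diam T ≤ r) : preO c α r T ≤ sizeDiam c α T := by
  have h := OuterMeasure.mkMetric'.pre_le (m := mfun (X := X) c α) (r := r) hd
  simpa [preO, mfun, hT] using h

theorem size_ne_top (hα : 0 < α) (hc' : c < ∞) {T : Set X} (hd : EMetric.diam T ≠ ∞) :
    sizeDiam c α T ≠ ∞ := by
  rw [sizeDiam]
  exact ENNReal.mul_ne_top hc'.ne (ENNReal.rpow_lt_top_of_nonneg hα.le hd).ne

/-- An approximating monotone sequence from below. -/
theorem exists_seq_lt_of_ne_zero {t : ℝ≥0∞} (ht : t ≠ 0) :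
    ∃ f : ℕ → ℝ≥0∞, Monotone f ∧ (∀ n, f n < t) ∧ ∀ s, s < t → ∃ n, s ≤ f n := by
  rcases eq_or_ne t ∞ with rfl | htop
  · refine ⟨fun n => (n : ℝ≥0∞), fun a b hab => by exact_mod_cast Nat.cast_le.2 hab, ?_, ?_⟩
    · exact fun n => ENNReal.natCast_lt_top n
    · intro s hs
      obtain ⟨n, hn⟩ := ENNReal.exists_nat_gt hs.ne
      exact ⟨n, hn.le⟩
  · refine ⟨fun n => t - ((n : ℝ≥0∞) + 1)⁻¹, ?_, ?_, ?_⟩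
    · intro a b hab
      exact tsub_le_tsub_left (ENNReal.inv_le_inv'
        (add_le_add_left (Nat.cast_le.2 hab) 1)) t
    · intro n
      refine ENNReal.sub_lt_self htop ht ?_
      exact ENNReal.inv_ne_zero.2 (by simp)
    · intro s hs
      have hpos : t - s ≠ 0 := by
        rw [← pos_iff_ne_zero, tsub_pos_iff_lt]
        exact hs
      obtain ⟨n, hn⟩ := ENNReal.exists_inv_nat_lt hpos
      refine ⟨n, ?_⟩
      have h1 : ((n : ℝ≥0∞) + 1)⁻¹ ≤ (n : ℝ≥0∞)⁻¹ := ENNReal.inv_le_inv' le_self_add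
      refine ENNReal.le_sub_of_add_le_right (ENNReal.inv_ne_top.2 (by simp)) ?_
      calc s + ((n : ℝ≥0∞) + 1)⁻¹ ≤ s + (t - s) := add_le_add_right (h1.trans hn.le) s
        _ = t := add_tsub_cancel_of_le hs.le

/-- Upper density estimate at a fixed scale. -/
theorem mu_le_of_supQ_le [MeasurableSpace X] (hα : 0 < α) (hc' : c < ∞) {μ : Measure X}
    {ε r t' : ℝ≥0∞}
    (hr0 : 0 < r) (hrε : r < ε) (hεtop : ε ≠ ∞) (ht' : t' ≠ ∞) {E : Set X}
    (hE : ∀ x ∈ E, supQ μ c α ε x ≤ t') (hfin : preO c α r E ≠ ∞) :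
    μ E ≤ t' * psiO c α E := by
  have key : ∀ γ : ℝ≥0∞, 0 < γ → γ ≠ ∞ → μ E ≤ t' * (preO c α r E + γ) := by
    intro γ hγ hγtop
    have hlt : preO c α r E < preO c α r E + γ := ENNReal.lt_add_right hfin hγ.ne'
    have hb : preO c α r E = ⨅ (g : ℕ → Set X) (_ : E ⊆ iUnion g), ∑' n,
        ⨆ _ : (g n).Nonempty,
          extend (fun s (_ : EMetric.diam s ≤ r) => mfun c α s) (g n) := by
      simp only [preO, OuterMeasure.mkMetric'.pre]
      exact OuterMeasure.boundedBy_apply E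
    have hlt' : (⨅ (g : ℕ → Set X) (_ : E ⊆ iUnion g), ∑' n, ⨆ _ : (g n).Nonempty,
        extend (fun s (_ : EMetric.diam s ≤ r) => mfun c α s) (g n))
          < preO c α r E + γ := by
      rw [← hb]; exact hlt
    rw [iInf_lt_iff] at hlt'
    obtain ⟨g, hlt'⟩ := hlt'
    rw [iInf_lt_iff] at hlt'
    obtain ⟨hgcov, hgsum⟩ := hlt'
    have hrhs : preO c α r E + γ ≠ ∞ := ENNReal.add_ne_top.2 ⟨hfin, hγtop⟩
    have hsumtop : (∑' n, ⨆ _ : (g n).Nonempty,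
        extend (fun s (_ : EMetric.diam s ≤ r) => mfun c α s) (g n)) ≠ ∞ :=
      (hgsum.trans (lt_top_iff_ne_top.2 hrhs)).ne
    classical
    set G : ℕ → Set X := fun n => if (g n ∩ E).Nonempty then g n else ∅ with hG
    have hGcov : E ⊆ ⋃ n, G n := by
      intro x hx
      obtain ⟨n, hn⟩ := mem_iUnion.1 (hgcov hx)
      refine mem_iUnion.2 ⟨n, ?_⟩
      have hGn : G n = g n := if_pos ⟨x, hn, hx⟩
      rw [hGn]
      exact hn
    have hterm : ∀ n, μ (G n) ≤ t' * (⨆ _ : (g n).Nonempty,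
        extend (fun s (_ : EMetric.diam s ≤ r) => mfun c α s) (g n)) := by
      intro n
      by_cases hne : (g n ∩ E).Nonempty
      swap
      · have hGe : G n = ∅ := if_neg hne
        simp [hGe]
      have hGn : G n = g n := if_pos hne
      have hgne : (g n).Nonempty := hne.mono inter_subset_left
      rw [hGn, iSup_pos hgne]
      have htermfin : extend (fun s (_ : EMetric.diam s ≤ r) => mfun c α s) (g n) ≠ ∞ := by
        intro htop
        apply hsumtop
        refine ENNReal.tsum_eq_top_of_eq_top ⟨n, ?_⟩
        rw [iSup_pos hgne, htop]
      have hdiam : EMetric.diam (g n) ≤ r := by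
        by_contra hd
        exact htermfin (extend_eq_top _ hd)
      rw [MeasureTheory.extend_eq (fun s (_ : EMetric.diam s ≤ r) => mfun c α s) hdiam]
        at htermfin ⊢
      have hS : g n ∈ closedBallsF X := by
        by_contra hSc
        exact htermfin (by simp [mfun, hSc])
      have hmfun : mfun c α (g n) = sizeDiam c α (g n) := by simp [mfun, hS]
      rw [hmfun] at htermfin ⊢
      obtain ⟨x, hxg, hxE⟩ := hne
      have hsup := hE x hxE
      have hζtop : sizeDiam c α (g n) ≠ ∞ := htermfin
      by_cases hadm : g n ∈ adm μ (closedBallsF X) (sizeDiam c α)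
      · have hQ : fedQuot μ (sizeDiam c α) (g n) ≤ t' := by
          refine le_trans ?_ hsup
          exact le_iSup₂ (f := fun (T' : Set X)
            (_ : T' ∈ adm μ (closedBallsF X) (sizeDiam c α) ∧ x ∈ T' ∧ EMetric.diam T' < ε) =>
            fedQuot μ (sizeDiam c α) T') (g n) ⟨hadm, hxg, lt_of_le_of_lt hdiam hrε⟩
        have hζ0 : sizeDiam c α (g n) ≠ 0 := by
          intro h0
          rw [fedQuot, if_pos h0] at hQ
          exact ht' (top_le_iff.1 hQ)
        rw [fedQuot, if_neg hζ0, if_neg hζtop] at hQ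
        exact (ENNReal.div_le_iff hζ0 hζtop).1 hQ
      · have hμ0 : μ (g n) = 0 := by
          rw [adm, mem_sep_iff, not_and_or] at hadm
          rcases hadm with h | h
          · exact absurd hS h
          rw [not_and_or, not_not, not_not] at h
          rcases h with h | h
          · exact h.2
          · exact absurd h.1 hζtop
        rw [hμ0]
        exact zero_le
    calc μ E ≤ μ (⋃ n, G n) := measure_mono hGcov
      _ ≤ ∑' n, μ (G n) := measure_iUnion_le _
      _ ≤ ∑' n, t' * (⨆ _ : (g n).Nonempty,
          extend (fun s (_ : EMetric.diam s ≤ r) => mfun c α s) (g n)) :=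
        ENNReal.tsum_le_tsum hterm
      _ = t' * ∑' n, (⨆ _ : (g n).Nonempty,
          extend (fun s (_ : EMetric.diam s ≤ r) => mfun c α s) (g n)) :=
        ENNReal.tsum_mul_left
      _ ≤ t' * (preO c α r E + γ) := mul_le_mul_right hgsum.le _
  rcases eq_or_ne t' 0 with rfl | ht'0
  · have := key 1 one_pos one_ne_top
    simpa using this
  · refine le_trans ?_ (mul_le_mul_right (preO_le_psiO hr0 E) t')
    refine ENNReal.le_of_forall_pos_le_add fun ε' hε' _ => ?_
    have hγ : (0 : ℝ≥0∞) < (ε' : ℝ≥0∞) / t' :=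
      ENNReal.div_pos (by exact_mod_cast hε'.ne') ht'
    have hγtop : (ε' : ℝ≥0∞) / t' ≠ ∞ :=
      (ENNReal.div_lt_top ENNReal.coe_ne_top ht'0).ne
    refine le_trans (key _ hγ hγtop) ?_
    rw [mul_add]
    exact add_le_add_right ENNReal.mul_div_le _
  
/-- Upper density estimate: if the Federer density is `< t` on `E`, then
`μ E ≤ t ψ(E)`. -/
theorem mu_le_mul_psiO [MeasurableSpace X] (hα : 0 < α) (hc' : c < ∞) {μ : Measure X}
    {t : ℝ≥0∞} (ht : t ≠ ∞) (ht0 : t ≠ 0) {E : Set X}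
    (hE : ∀ x ∈ E, fedDensity μ (closedBallsF X) (sizeDiam c α) x < t)
    (hfin : psiO c α E ≠ ∞) : μ E ≤ t * psiO c α E := by
  obtain ⟨f, hfmono, hflt, hfapprox⟩ := exists_seq_lt_of_ne_zero ht0
  set A : ℕ → Set X := fun n => {x ∈ E | supQ μ c α ((n : ℝ≥0∞) + 1)⁻¹ x ≤ f n} with hA
  have hinvmono : ∀ {a b : ℕ}, a ≤ b → ((b : ℝ≥0∞) + 1)⁻¹ ≤ ((a : ℝ≥0∞) + 1)⁻¹ :=
    fun {a b} hab => ENNReal.inv_le_inv' (add_le_add_left (Nat.cast_le.2 hab) 1)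
  have hAmono : Monotone A := by
    intro a b hab x hx
    exact ⟨hx.1, le_trans (le_trans (supQ_mono μ c α (hinvmono hab) x) hx.2) (hfmono hab)⟩
  have hAcover : E = ⋃ n, A n := by
    apply Subset.antisymm
    · intro x hx
      have hFx : (⨅ (ε : ℝ≥0∞) (_ : 0 < ε), supQ μ c α ε x) < t := hE x hx
      rw [iInf_lt_iff] at hFx
      obtain ⟨ε, hFx⟩ := hFx
      rw [iInf_lt_iff] at hFx
      obtain ⟨hε, hFx⟩ := hFx
      obtain ⟨n₀, hn₀⟩ := ENNReal.exists_inv_nat_lt hε.ne'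
      have h1 : supQ μ c α ((n₀ : ℝ≥0∞) + 1)⁻¹ x < t := by
        refine lt_of_le_of_lt (supQ_mono μ c α ?_ x) hFx
        exact le_trans (ENNReal.inv_le_inv' le_self_add) hn₀.le
      obtain ⟨m, hm⟩ := hfapprox _ h1
      refine mem_iUnion.2 ⟨max n₀ m, hx, ?_⟩
      exact le_trans (le_trans (supQ_mono μ c α (hinvmono (le_max_left n₀ m)) x) hm)
        (hfmono (le_max_right n₀ m))
    · exact iUnion_subset fun n => sep_subset _ _
  have hAbound : ∀ n, μ (A n) ≤ t * psiO c α E := by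
    intro n
    have h1 : μ (A n) ≤ f n * psiO c α (A n) := by
      refine mu_le_of_supQ_le hα hc' (r := ((n : ℝ≥0∞) + 2)⁻¹) ?_ ?_ ?_ (hflt n).ne_top
        (fun x hx => hx.2) ?_
      · simp [ENNReal.inv_pos]
      · refine ENNReal.inv_lt_inv' ?_
        exact ENNReal.add_lt_add_left (ENNReal.natCast_ne_top n) one_lt_two
      · simp [ENNReal.inv_ne_top]
      · refine fun htop => hfin (top_le_iff.1 ?_)
        rw [← htop]
        exact le_trans (preO_le_psiO (by simp [ENNReal.inv_pos]) _)
          (measure_mono (sep_subset _ _))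
    refine le_trans h1 (mul_le_mul' (hflt n).le (measure_mono (sep_subset _ _)))
  have hUn : μ (⋃ n, A n) = ⨆ n, μ (A n) := hAmono.measure_iUnion
  conv_lhs => rw [hAcover]
  rw [hUn]
  exact iSup_le hAbound

end Stmt9

end Aux4


section Aux5

variable [MetricSpace X] [MeasurableSpace X] [BorelSpace X]

namespace Stmt9

theorem outerRegular_of_sigmaFiniteOpen (μ : Measure X) (hσ : SigmaFiniteOpen μ) :
    Measure.OuterRegular μ := by
  obtain ⟨U, hUo, hUun, hUfin⟩ := hσ
  have hOR : ∀ n, Measure.OuterRegular (μ.restrict (U n)) := by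
    intro n
    haveI : IsFiniteMeasure (μ.restrict (U n)) :=
      ⟨by rw [Measure.restrict_apply_univ]; exact hUfin n⟩
    infer_instance
  exact Measure.FiniteSpanningSetsIn.outerRegular
    ⟨U, fun n => ⟨hUo n, hOR n⟩, hUfin, hUun⟩

theorem mul_size_lt_of_lt_fedQuot {μ : Measure X} {c : ℝ≥0∞} {α : ℝ} {t : ℝ≥0∞} {T : Set X}
    (htop : t ≠ ∞) (hζtop : sizeDiam c α T ≠ ∞)
    (hadm : T ∈ adm μ (closedBallsF X) (sizeDiam c α))
    (h : t < fedQuot μ (sizeDiam c α) T) : t * sizeDiam c α T < μ T := by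
  rcases eq_or_ne (sizeDiam c α T) 0 with h0 | h0
  · rw [h0, mul_zero]
    have hμ : μ T ≠ 0 := fun hμ0 => hadm.2.1 ⟨h0, hμ0⟩
    exact pos_iff_ne_zero.2 hμ
  · rw [fedQuot, if_neg h0, if_neg hζtop] at h
    rcases eq_or_ne (μ T) ∞ with hμ | hμ
    · rw [hμ]; exact ENNReal.mul_lt_top htop.lt_top hζtop.lt_top
    · exact (ENNReal.lt_div_iff_mul_lt (Or.inl h0) (Or.inl hζtop)).1 h

/-- Lower density estimate: if the Federer density is `> t` on `E`, then `t ψ(E) ≤ μ E`. -/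
theorem mul_psiO_le_mu {μ : Measure X} {c : ℝ≥0∞} {α : ℝ} (hα : 0 < α) (hc' : c < ∞)
    [Measure.OuterRegular μ] {t : ℝ≥0∞} (ht0 : t ≠ 0) (ht : t ≠ ∞) {E : Set X}
    (hE : ∀ x ∈ E, t < fedDensity μ (closedBallsF X) (sizeDiam c α) x) :
    t * psiO c α E ≤ μ E := by
  rcases eq_or_ne (μ E) ∞ with hμE | hμE
  · rw [hμE]; exact le_top
  have main : ∀ γ : ℝ≥0∞, 0 < γ → γ ≠ ∞ → psiO c α E ≤ (μ E + γ) / t := by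
    intro γ hγ0 hγtop
    obtain ⟨V, hEV, hVo, hμV⟩ := Set.exists_isOpen_lt_of_lt E (μ E + γ)
      (ENNReal.lt_add_right hμE hγ0.ne')
    have hμVfin : μ V ≠ ∞ :=
      (hμV.trans (lt_top_iff_ne_top.2 (ENNReal.add_ne_top.2 ⟨hμE, hγtop⟩))).ne
    have hpre : ∀ dr : ℝ, 0 < dr → preO c α (ENNReal.ofReal dr) E ≤ μ V / t := by
      intro dr hdr
      set S6 : ℝ≥0∞ := ENNReal.ofReal (dr / 6) with hS6
      have hS6pos : 0 < S6 := ENNReal.ofReal_pos.2 (by linarith)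
      set Fam : Set (Set X) := {T | T ∈ adm μ (closedBallsF X) (sizeDiam c α) ∧ T ⊆ V ∧
        EMetric.diam T ≤ S6 ∧ t * sizeDiam c α T < μ T} with hFamdef
      have hFamS : ∀ T ∈ Fam, T ∈ closedBallsF X := fun T hT => hT.1.1
      have hFamne : ∀ T ∈ Fam, (id T : Set X).Nonempty := by
        intro T hT
        obtain ⟨z, r', hr', hTz⟩ := hFamS T hT
        exact ⟨z, by rw [hTz]; exact Metric.mem_closedBall_self hr'.le⟩
      have hFambd : ∀ T ∈ Fam, EMetric.diam T ≠ ∞ := fun T hT =>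
        (lt_of_le_of_lt hT.2.2.1 (lt_top_iff_ne_top.2 ENNReal.ofReal_ne_top)).ne
      have hδle : ∀ T ∈ Fam, Metric.diam T ≤ dr / 6 := by
        intro T hT
        rw [Metric.diam]
        calc (EMetric.diam T).toReal ≤ S6.toReal :=
              ENNReal.toReal_mono ENNReal.ofReal_ne_top hT.2.2.1
          _ = dr / 6 := ENNReal.toReal_ofReal (by linarith)
      obtain ⟨u, huFam, hudisj, hucov⟩ := Vitali.exists_disjoint_subfamily_covering_enlargement
        (B := id) Fam (fun T => Metric.diam T) 2 one_lt_two
        (fun a _ => Metric.diam_nonneg) (dr / 6) hδle hFamne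
      have humeas : ∀ b : Set X, b ∈ u → MeasurableSet b := by
        intro b hb
        obtain ⟨z, r', hr', hbz⟩ := hFamS b (huFam hb)
        rw [hbz]
        exact Metric.isClosed_closedBall.measurableSet
      have huV : ∀ b ∈ u, b ⊆ V := fun b hb => (huFam hb).2.1
      have huμpos : ∀ b ∈ u, 0 < μ b := fun b hb =>
        lt_of_le_of_lt zero_le (huFam hb).2.2.2
      have hucnt : u.Countable := by
        rw [← Set.countable_coe_iff]
        have hcnt := Measure.countable_meas_pos_of_disjoint_of_meas_iUnion_ne_top₀ (μ := μ)
          (As := fun b : ↥u => (b : Set X))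
          (fun b => (humeas b b.2).nullMeasurableSet)
          (fun i j hij => Disjoint.aedisjoint (hudisj i.2 j.2 fun h => hij (Subtype.ext h)))
          (by
            refine ne_top_of_le_ne_top hμVfin (measure_mono ?_)
            exact iUnion_subset fun b => huV b b.2)
        have huniv : {i : ↥u | 0 < μ (i : Set X)} = univ :=
          eq_univ_of_forall fun b => huμpos b b.2
        rw [huniv] at hcnt
        exact countable_univ_iff.1 hcnt
      haveI : Countable ↥u := hucnt.to_subtype
      have hζle : ∀ b : ↥u, sizeDiam c α (b : Set X) ≤ μ (b : Set X) / t := by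
        intro b
        refine (ENNReal.le_div_iff_mul_le (Or.inl ht0) (Or.inl ht)).2 ?_
        rw [mul_comm]
        exact ((huFam b.2).2.2.2).le
      have hsumμ : ∑' b : ↥u, μ (b : Set X) ≤ μ V := by
        have h := measure_biUnion (μ := μ) hucnt hudisj humeas
        calc ∑' b : ↥u, μ (b : Set X) = μ (⋃ b ∈ u, id b) := h.symm
          _ ≤ μ V := measure_mono (iUnion₂_subset huV)
      have hWle : ∑' b : ↥u, sizeDiam c α (b : Set X) ≤ μ V / t := by
        calc ∑' b : ↥u, sizeDiam c α (b : Set X) ≤ ∑' b : ↥u, μ (b : Set X) / t :=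
              ENNReal.tsum_le_tsum hζle
          _ = (∑' b : ↥u, μ (b : Set X)) / t := by
              simp only [div_eq_mul_inv]
              rw [ENNReal.tsum_mul_right]
          _ ≤ μ V / t := ENNReal.div_le_div_right hsumμ t
      have hWfin : (∑' b : ↥u, sizeDiam c α (b : Set X)) ≠ ∞ :=
        ne_top_of_le_ne_top (ENNReal.div_lt_top hμVfin ht0).ne hWle
      set κ : ℝ≥0∞ := (6 : ℝ≥0∞) ^ α with hκ
      have hκ1 : (1 : ℝ≥0∞) ≤ κ := by
        rw [hκ, ← ENNReal.one_rpow α]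
        exact ENNReal.rpow_le_rpow (by norm_num) hα.le
      have hκ0 : κ ≠ 0 := fun h => by simp [h] at hκ1
      have hκtop : κ ≠ ∞ := by
        rw [hκ]
        exact (ENNReal.rpow_lt_top_of_nonneg hα.le (by norm_num)).ne
      have hpt : ∀ b : ↥u, ∃ z, z ∈ (b : Set X) := fun b => hFamne _ (huFam b.2)
      classical
      set ctr : ↥u → X := fun b => (hpt b).choose with hctr
      have hctrmem : ∀ b : ↥u, ctr b ∈ (b : Set X) := fun b => (hpt b).choose_spec
      set enl : ↥u → Set X := fun b => if EMetric.diam (b : Set X) = 0 then (b : Set X)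
        else Metric.closedBall (ctr b) (3 * Metric.diam (b : Set X)) with henl
      have hbddb : ∀ b : ↥u, EMetric.diam (b : Set X) ≠ ∞ := fun b => hFambd _ (huFam b.2)
      have hediam_eq : ∀ b : ↥u,
          EMetric.diam (b : Set X) = ENNReal.ofReal (Metric.diam (b : Set X)) := fun b =>
        ediam_ofReal (Metric.isBounded_iff_ediam_ne_top.2 (hbddb b))
      have henl_diam : ∀ b : ↥u, EMetric.diam (enl b) ≤ 6 * EMetric.diam (b : Set X) := by
        intro b
        simp only [henl]
        split
        · exact le_mul_of_one_le_left' (by norm_num)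
        · have hb1 : Bornology.IsBounded
              (Metric.closedBall (ctr b) (3 * Metric.diam (b : Set X))) :=
            Metric.isBounded_closedBall
          have h2 : Metric.diam (Metric.closedBall (ctr b) (3 * Metric.diam (b : Set X)))
              ≤ 2 * (3 * Metric.diam (b : Set X)) :=
            Metric.diam_closedBall (by positivity)
          calc EMetric.diam (Metric.closedBall (ctr b) (3 * Metric.diam (b : Set X)))
              = ENNReal.ofReal
                (Metric.diam (Metric.closedBall (ctr b) (3 * Metric.diam (b : Set X)))) :=
                ediam_ofReal hb1
            _ ≤ ENNReal.ofReal (6 * Metric.diam (b : Set X)) :=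
                ENNReal.ofReal_le_ofReal (by linarith)
            _ = 6 * ENNReal.ofReal (Metric.diam (b : Set X)) := by
                rw [ENNReal.ofReal_mul (by norm_num), ENNReal.ofReal_ofNat]
            _ = 6 * EMetric.diam (b : Set X) := by rw [← hediam_eq b]
      have henl_size : ∀ b : ↥u, sizeDiam c α (enl b) ≤ κ * sizeDiam c α (b : Set X) := by
        intro b
        rw [sizeDiam, sizeDiam, hκ]
        calc c * EMetric.diam (enl b) ^ α ≤ c * (6 * EMetric.diam (b : Set X)) ^ α :=
              mul_le_mul_right (ENNReal.rpow_le_rpow (henl_diam b) hα.le) c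
          _ = c * ((6 : ℝ≥0∞) ^ α * EMetric.diam (b : Set X) ^ α) := by
              rw [ENNReal.mul_rpow_of_nonneg _ _ hα.le]
          _ = (6 : ℝ≥0∞) ^ α * (c * EMetric.diam (b : Set X) ^ α) := by ring
      have henl_diam_le : ∀ b : ↥u, EMetric.diam (enl b) ≤ ENNReal.ofReal dr := by
        intro b
        refine (henl_diam b).trans ?_
        calc (6 : ℝ≥0∞) * EMetric.diam (b : Set X) ≤ 6 * S6 :=
              mul_le_mul_right (huFam b.2).2.2.1 6
          _ = ENNReal.ofReal dr := by
              rw [hS6, ← ENNReal.ofReal_ofNat, ← ENNReal.ofReal_mul (by norm_num)]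
              rw [show (6:ℝ) * (dr / 6) = dr by ring]
      have henl_S : ∀ b : ↥u, enl b ∈ closedBallsF X := by
        intro b
        simp only [henl]
        split
        case isTrue h => exact (huFam b.2).1.1
        case isFalse h =>
          refine ⟨ctr b, 3 * Metric.diam (b : Set X), ?_, rfl⟩
          have h3 : 0 < Metric.diam (b : Set X) := by
            rw [Metric.diam]
            exact ENNReal.toReal_pos h (hbddb b)
          linarith
      refine ENNReal.le_of_forall_pos_le_add fun γ' hγ' _ => ?_
      have htail := ENNReal.tendsto_tsum_compl_atTop_zero hWfin
      have hsmall : 0 < (γ' : ℝ≥0∞) / κ :=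
        ENNReal.div_pos (by exact_mod_cast hγ'.ne') hκtop
      obtain ⟨J, hJ⟩ : ∃ J : Finset ↥u,
          (∑' b : {x : ↥u // x ∉ J}, sizeDiam c α ((b : ↥u) : Set X)) < (γ' : ℝ≥0∞) / κ :=
        (htail.eventually_lt_const hsmall).exists
      set UJ : Set X := ⋃ (b : ↥u) (_ : b ∈ J), (b : Set X) with hUJ
      have hUJclosed : IsClosed UJ := by
        rw [hUJ]
        refine isClosed_biUnion_finset fun b _ => ?_
        obtain ⟨z, r', hr', hbz⟩ := hFamS _ (huFam b.2)
        rw [hbz]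
        exact Metric.isClosed_closedBall
      have hcov2 : E \ UJ ⊆ ⋃ b : {x : ↥u // x ∉ J}, enl (b : ↥u) := by
        rintro x ⟨hxE, hxUJ⟩
        have hxV : x ∈ V := hEV hxE
        have h1 : 0 < EMetric.infEdist x Vᶜ := by
          rw [EMetric.infEdist, EMetric.infEdist_pos_iff_notMem_closure, hVo.isClosed_compl.closure_eq]
          simpa using hxV
        have h2 : 0 < EMetric.infEdist x UJ := by
          rw [EMetric.infEdist, EMetric.infEdist_pos_iff_notMem_closure, hUJclosed.closure_eq]
          exact hxUJ
        set ε' : ℝ≥0∞ := min (min (EMetric.infEdist x Vᶜ) (EMetric.infEdist x UJ)) S6 with hε'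
        have hε'pos : 0 < ε' := lt_min (lt_min h1 h2) hS6pos
        have hlt := lt_of_lt_of_le (hE x hxE) (fedDensity_le_supQ μ c α hε'pos x)
        obtain ⟨T, ⟨hTadm, hxT, hTdiam⟩, hQ⟩ := lt_supQ_iff.1 hlt
        have hTd6 : EMetric.diam T < S6 := lt_of_lt_of_le hTdiam (min_le_right _ _)
        have hTdtop : EMetric.diam T ≠ ∞ :=
          (hTd6.trans (lt_top_iff_ne_top.2 ENNReal.ofReal_ne_top)).ne
        have hζtop : sizeDiam c α T ≠ ∞ := size_ne_top hα hc' hTdtop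
        have hμT : t * sizeDiam c α T < μ T := mul_size_lt_of_lt_fedQuot ht hζtop hTadm hQ
        have hTV : T ⊆ V := by
          intro y hy
          by_contra hyV
          have hle1 : EMetric.infEdist x Vᶜ ≤ edist x y :=
            EMetric.infEdist_le_edist_of_mem hyV
          have hle2 : edist x y ≤ EMetric.diam T := EMetric.edist_le_diam_of_mem hxT hy
          exact absurd (lt_of_le_of_lt (hle1.trans hle2) hTdiam)
            (not_lt.2 ((min_le_left _ _).trans (min_le_left _ _)))
        have hTUJ : ∀ y, y ∈ T → y ∉ UJ := by
          intro y hyT hyUJ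
          have hle1 : EMetric.infEdist x UJ ≤ edist x y :=
            EMetric.infEdist_le_edist_of_mem hyUJ
          have hle2 : edist x y ≤ EMetric.diam T := EMetric.edist_le_diam_of_mem hxT hyT
          exact absurd (lt_of_le_of_lt (hle1.trans hle2) hTdiam)
            (not_lt.2 ((min_le_left _ _).trans (min_le_right _ _)))
        have hTFam : T ∈ Fam := ⟨hTadm, hTV, hTd6.le, hμT⟩
        obtain ⟨b, hbu, hbne, hbdiam⟩ := hucov T hTFam
        obtain ⟨w, hwT, hwb⟩ := hbne
        have hbJ : (⟨b, hbu⟩ : ↥u) ∉ J := by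
          intro hbJ'
          exact hTUJ w hwT (mem_iUnion₂.2 ⟨⟨b, hbu⟩, hbJ', hwb⟩)
        have hbT : Bornology.IsBounded T := Metric.isBounded_iff_ediam_ne_top.2 hTdtop
        have hdxw : dist x w ≤ Metric.diam T := Metric.dist_le_diam_of_mem hbT hxT hwT
        have hbb : Bornology.IsBounded (b : Set X) :=
          Metric.isBounded_iff_ediam_ne_top.2 (hFambd b (huFam hbu))
        refine mem_iUnion.2 ⟨⟨⟨b, hbu⟩, hbJ⟩, ?_⟩
        simp only [henl]
        split
        case isTrue h0 =>
          have hb0 : Metric.diam (b : Set X) = 0 := by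
            rw [Metric.diam, show Metric.ediam (b : Set X) = 0 from h0]; simp
          have hd0 : dist x w = 0 := by
            have := hbdiam
            simp only [hb0] at this
            have h5 : Metric.diam T ≤ 0 := by linarith
            exact le_antisymm (hdxw.trans h5) dist_nonneg
          have hxw : x = w := by rwa [dist_eq_zero] at hd0
          exact hxw ▸ hwb
        case isFalse h0 =>
          have hdwz : dist w (ctr ⟨b, hbu⟩) ≤ Metric.diam (b : Set X) :=
            Metric.dist_le_diam_of_mem hbb hwb (hctrmem ⟨b, hbu⟩)
          refine Metric.mem_closedBall.2 ?_
          calc dist x (ctr ⟨b, hbu⟩) ≤ dist x w + dist w (ctr ⟨b, hbu⟩) := dist_triangle _ _ _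
            _ ≤ Metric.diam T + Metric.diam (b : Set X) := add_le_add hdxw hdwz
            _ ≤ 2 * Metric.diam (b : Set X) + Metric.diam (b : Set X) := by
                have := hbdiam
                linarith
            _ = 3 * Metric.diam (b : Set X) := by ring
      have hsub : E ⊆ UJ ∪ (E \ UJ) := fun x hx =>
        (em (x ∈ UJ)).elim (fun h => Or.inl h) fun h => Or.inr ⟨hx, h⟩
      have hfirst : preO c α (ENNReal.ofReal dr) UJ
          ≤ ∑ b ∈ J, sizeDiam c α (b : Set X) := by
        refine le_trans (measure_biUnion_finset_le J (fun b : ↥u => (b : Set X))) ?_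
        refine Finset.sum_le_sum fun b _ => ?_
        refine preO_le_sizeDiam (hFamS _ (huFam b.2)) ?_
        refine le_trans (huFam b.2).2.2.1 ?_
        rw [hS6]
        exact ENNReal.ofReal_le_ofReal (by linarith)
      have hsecond : preO c α (ENNReal.ofReal dr) (E \ UJ) ≤ κ * ((γ' : ℝ≥0∞) / κ) := by
        refine le_trans (measure_mono hcov2) ?_
        refine le_trans (measure_iUnion_le _) ?_
        calc ∑' b : {x : ↥u // x ∉ J}, preO c α (ENNReal.ofReal dr) (enl (b : ↥u))
            ≤ ∑' b : {x : ↥u // x ∉ J}, sizeDiam c α (enl (b : ↥u)) :=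
              ENNReal.tsum_le_tsum fun b => preO_le_sizeDiam (henl_S _) (henl_diam_le _)
          _ ≤ ∑' b : {x : ↥u // x ∉ J}, κ * sizeDiam c α ((b : ↥u) : Set X) :=
              ENNReal.tsum_le_tsum fun b => henl_size _
          _ = κ * ∑' b : {x : ↥u // x ∉ J}, sizeDiam c α ((b : ↥u) : Set X) :=
              ENNReal.tsum_mul_left
          _ ≤ κ * ((γ' : ℝ≥0∞) / κ) := mul_le_mul_right hJ.le κ
      calc preO c α (ENNReal.ofReal dr) E
          ≤ preO c α (ENNReal.ofReal dr) (UJ ∪ (E \ UJ)) := measure_mono hsub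
        _ ≤ preO c α (ENNReal.ofReal dr) UJ + preO c α (ENNReal.ofReal dr) (E \ UJ) :=
            measure_union_le _ _
        _ ≤ (∑ b ∈ J, sizeDiam c α (b : Set X)) + κ * ((γ' : ℝ≥0∞) / κ) :=
            add_le_add hfirst hsecond
        _ ≤ μ V / t + (γ' : ℝ≥0∞) := by
            refine add_le_add ?_ ENNReal.mul_div_le
            exact le_trans (ENNReal.sum_le_tsum J) hWle
    have hψ : psiO c α E ≤ μ V / t := by
      have hrepr : psiO c α E = ⨆ (r : ℝ≥0∞) (_ : 0 < r), preO c α r E := by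
        rw [psiO, OuterMeasure.mkMetric', OuterMeasure.iSup_apply]
        refine iSup_congr fun r => ?_
        rw [OuterMeasure.iSup_apply]
        rfl
      rw [hrepr]
      refine iSup₂_le fun r hr => ?_
      rcases eq_or_ne r ∞ with rfl | hrtop
      · refine le_trans ?_ (hpre 1 one_pos)
        exact OuterMeasure.mkMetric'.mono_pre _ le_top E
      · refine le_trans ?_ (hpre (min r.toReal 1) (lt_min (ENNReal.toReal_pos hr.ne' hrtop)
          one_pos))
        refine OuterMeasure.mkMetric'.mono_pre _ ?_ E
        calc ENNReal.ofReal (min r.toReal 1) ≤ ENNReal.ofReal r.toReal :=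
              ENNReal.ofReal_le_ofReal (min_le_left _ _)
          _ = r := ENNReal.ofReal_toReal hrtop
    exact hψ.trans (ENNReal.div_le_div_right hμV.le t)
  refine ENNReal.le_of_forall_pos_le_add fun γ hγ _ => ?_
  have h1 := main (γ : ℝ≥0∞) (by exact_mod_cast hγ) ENNReal.coe_ne_top
  calc t * psiO c α E ≤ t * ((μ E + (γ : ℝ≥0∞)) / t) := mul_le_mul_right h1 t
    _ ≤ μ E + (γ : ℝ≥0∞) := ENNReal.mul_div_le

end Stmt9

end Aux5


section Aux6

namespace Stmt9

theorem le_of_forall_one_lt_mul {a b : ℝ≥0∞}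
    (h : ∀ v : ℝ≥0∞, 1 < v → v ≠ ∞ → a ≤ v * b) : a ≤ b := by
  rcases eq_or_ne b ∞ with rfl | hb
  · exact le_top
  rcases eq_or_ne b 0 with rfl | hb0
  · simpa using h 2 one_lt_two (by norm_num)
  refine ENNReal.le_of_forall_pos_le_add fun ε hε _ => ?_
  have hv : (1 : ℝ≥0∞) < 1 + (ε : ℝ≥0∞) / b :=
    ENNReal.lt_add_right one_ne_top
      (ENNReal.div_pos (by exact_mod_cast hε.ne') hb).ne'
  have hvtop : (1 : ℝ≥0∞) + (ε : ℝ≥0∞) / b ≠ ∞ :=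
    ENNReal.add_ne_top.2 ⟨one_ne_top, (ENNReal.div_lt_top ENNReal.coe_ne_top hb0).ne⟩
  refine (h _ hv hvtop).trans ?_
  rw [add_mul, one_mul]
  refine add_le_add_right ?_ b
  calc (ε : ℝ≥0∞) / b * b = b * ((ε : ℝ≥0∞) / b) := mul_comm _ _
    _ ≤ (ε : ℝ≥0∞) := ENNReal.mul_div_le

end Stmt9

end Aux6

/-- Spherical area formula. Let `X` be diametrically regular, `α > 0`,
`μ` Borel regular with a countable open cover by sets of finite measure, `B ⊆ A` Borel with
`S_{μ,ζ_{b,α}}` covering `A` finely. Then `θ^α(μ,·)` is Borel on `A`; and if `S^α(A) < ∞`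
and `μ⌊A ≪ S^α⌊A`, then `μ(B) = ∫_B θ^α(μ,x) dS^α(x)`. -/
theorem stmt9 [MetricSpace X] [MeasurableSpace X] [BorelSpace X]
    (hX : DiamRegular X)
    (α : ℝ) (hα : 0 < α) (c : ℝ≥0∞) (hc : 0 < c) (hc' : c < ∞)
    (μ : Measure X) (hreg : BorelRegular μ) (hσ : SigmaFiniteOpen μ)
    (A B : Set X) (hA : MeasurableSet A) (hB : MeasurableSet B) (hBA : B ⊆ A)
    (hfine : ∀ x ∈ A, Fine (adm μ (closedBallsF X) (sizeDiam c α)) x) :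
    Measurable (A.restrict (fedDensity μ (closedBallsF X) (sizeDiam c α))) ∧
    (psiM (closedBallsF X) (sizeDiam c α) A < ∞ →
      μ.restrict A ≪ (psiM (closedBallsF X) (sizeDiam c α)).restrict A →
      μ B = ∫⁻ x in B, fedDensity μ (closedBallsF X) (sizeDiam c α) x
        ∂(psiM (closedBallsF X) (sizeDiam c α))) := by
  have hmeasF : Measurable (fedDensity μ (closedBallsF X) (sizeDiam c α)) :=
    Stmt9.measurable_fedDensity hX hα hc hc' hσ
  refine ⟨hmeasF.comp measurable_subtype_coe, ?_⟩
  intro hψA hac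
  haveI := Stmt9.outerRegular_of_sigmaFiniteOpen μ hσ
  set F : X → ℝ≥0∞ := fedDensity μ (closedBallsF X) (sizeDiam c α) with hFdef
  set ψ : Measure X := psiM (closedBallsF X) (sizeDiam c α) with hψdef
  set Z0 : Set X := B ∩ F ⁻¹' {0} with hZ0def
  set Zi : Set X := B ∩ F ⁻¹' {∞} with hZidef
  set P : Set X := B ∩ F ⁻¹' (Ioo 0 ∞) with hPdef
  have hZ0m : MeasurableSet Z0 := hB.inter (hmeasF (measurableSet_singleton 0))
  have hZim : MeasurableSet Zi := hB.inter (hmeasF (measurableSet_singleton ∞))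
  have hPm : MeasurableSet P := hB.inter (hmeasF measurableSet_Ioo)
  have hψle : ∀ {S : Set X}, S ⊆ B → MeasurableSet S → Stmt9.psiO c α S ≠ ∞ := by
    intro S hSB hSm
    rw [← Stmt9.psiM_apply hSm]
    exact (lt_of_le_of_lt (measure_mono (hSB.trans hBA)) hψA).ne
  -- the zero-density part is `μ`-null
  have hZ0 : μ Z0 = 0 := by
    have hbd : ∀ t : ℝ≥0∞, t ≠ 0 → t ≠ ∞ → μ Z0 ≤ t * Stmt9.psiO c α Z0 := by
      intro t ht0 httop
      refine Stmt9.mu_le_mul_psiO hα hc' httop ht0 ?_ (hψle inter_subset_left hZ0m)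
      rintro x ⟨hxB, hx0⟩
      have h0 : F x = 0 := hx0
      show F x < t
      rw [h0]
      exact pos_iff_ne_zero.2 ht0
    have hψZ0 : Stmt9.psiO c α Z0 ≠ ∞ := hψle inter_subset_left hZ0m
    refine le_antisymm ?_ zero_le
    refine ENNReal.le_of_forall_pos_le_add fun ε hε _ => ?_
    rw [zero_add]
    rcases eq_or_ne (Stmt9.psiO c α Z0) 0 with hC | hC
    · refine le_trans (hbd 1 one_ne_zero one_ne_top) ?_
      rw [hC, mul_zero]
      exact zero_le
    refine le_trans (hbd ((ε : ℝ≥0∞) / Stmt9.psiO c α Z0)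
      (ENNReal.div_pos (by exact_mod_cast hε.ne') hψZ0).ne'
      (ENNReal.div_lt_top ENNReal.coe_ne_top hC).ne) ?_
    calc (ε : ℝ≥0∞) / Stmt9.psiO c α Z0 * Stmt9.psiO c α Z0
        = Stmt9.psiO c α Z0 * ((ε : ℝ≥0∞) / Stmt9.psiO c α Z0) := mul_comm _ _
      _ ≤ (ε : ℝ≥0∞) := ENNReal.mul_div_le
  have hZiA : Zi ∩ A = Zi := inter_eq_left.2 (inter_subset_left.trans hBA)
  -- the infinite-density part
  have hZi : μ Zi = ∫⁻ x in Zi, F x ∂ψ := by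
    have hint : ∫⁻ x in Zi, F x ∂ψ = ∞ * ψ Zi := by
      rw [setLIntegral_congr_fun_ae hZim (ae_of_all _ fun x hx => hx.2), setLIntegral_const]
    rcases eq_or_ne (ψ Zi) 0 with h0 | h0
    · rw [hint, h0, mul_zero]
      have h1 : ψ.restrict A Zi = 0 := by
        rw [Measure.restrict_apply hZim, hZiA]
        exact h0
      have h2 := hac h1
      rwa [Measure.restrict_apply hZim, hZiA] at h2
    · rw [hint, ENNReal.top_mul h0]
      have hψZi : Stmt9.psiO c α Zi = ψ Zi := by
        rw [hψdef]; exact (Stmt9.psiM_apply hZim).symm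
      have hψZitop : ψ Zi ≠ ∞ := by
        rw [← hψZi]; exact hψle inter_subset_left hZim
      by_contra hne
      obtain ⟨n, hn⟩ := ENNReal.exists_nat_gt (ENNReal.div_lt_top hne h0).ne
      have hn0 : (n : ℝ≥0∞) ≠ 0 := (lt_of_le_of_lt zero_le hn).ne'
      have hbd : (n : ℝ≥0∞) * Stmt9.psiO c α Zi ≤ μ Zi := by
        refine Stmt9.mul_psiO_le_mu hα hc' hn0 (ENNReal.natCast_ne_top n) ?_
        rintro x hx
        show (n : ℝ≥0∞) < F x
        have hxi : F x = ∞ := hx.2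
        rw [hxi]
        exact ENNReal.natCast_lt_top n
      rw [hψZi] at hbd
      have hlt : μ Zi < (n : ℝ≥0∞) * ψ Zi := by
        rw [← ENNReal.div_lt_iff (Or.inl h0) (Or.inl hψZitop)]
        exact hn
      exact absurd (lt_of_lt_of_le hlt hbd) (lt_irrefl _)
  -- the main part
  have hP : μ P = ∫⁻ x in P, F x ∂ψ := by
    set I := ∫⁻ x in P, F x ∂ψ with hI
    have main : ∀ v : ℝ≥0∞, 1 < v → v ≠ ∞ → μ P ≤ v * I ∧ I ≤ v * μ P := by
      intro v hv hvtop
      have hv0 : v ≠ 0 := (lt_trans zero_lt_one hv).ne'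
      have hzpow0 : ∀ k : ℤ, v ^ k ≠ 0 := fun k => (ENNReal.zpow_pos hv0 hvtop k).ne'
      have hzpowtop : ∀ k : ℤ, v ^ k ≠ ∞ := fun k => (ENNReal.zpow_lt_top hv0 hvtop k).ne
      have hvsucc : ∀ k : ℤ, v ^ (k + 1) = v ^ k * v := by
        intro k
        lift v to NNReal using hvtop with r
        have hr : r ≠ 0 := by exact_mod_cast hv0
        rw [← ENNReal.coe_zpow hr, ← ENNReal.coe_zpow hr, ← ENNReal.coe_mul,
          zpow_add_one₀ hr]
      set Bk : ℤ → Set X := fun k => P ∩ F ⁻¹' (Ico (v ^ k) (v ^ (k + 1))) with hBkdef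
      have hBkm : ∀ k, MeasurableSet (Bk k) := fun k => hPm.inter (hmeasF measurableSet_Ico)
      have hBkdisj : Pairwise (Function.onFun Disjoint Bk) := by
        intro k k' hkk'
        refine Set.disjoint_left.2 ?_
        rintro x ⟨-, hx1⟩ ⟨-, hx2⟩
        rcases lt_or_gt_of_ne hkk' with h | h
        · exact absurd (lt_of_lt_of_le hx1.2 (ENNReal.zpow_le_of_le hv.le (by omega)))
            (not_lt.2 hx2.1)
        · exact absurd (lt_of_lt_of_le hx2.2 (ENNReal.zpow_le_of_le hv.le (by omega)))
            (not_lt.2 hx1.1)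
      have hPcover : P = ⋃ k, Bk k := by
        apply Subset.antisymm
        · rintro x hx
          obtain ⟨k, hk⟩ := ENNReal.exists_mem_Ico_zpow hx.2.1.ne' hx.2.2.ne hv hvtop
          exact mem_iUnion.2 ⟨k, hx, hk⟩
        · exact iUnion_subset fun k => inter_subset_left
      have hBkB : ∀ k, Bk k ⊆ B := fun k => inter_subset_left.trans inter_subset_left
      have hup : ∀ k, μ (Bk k) ≤ v ^ (k + 1) * ψ (Bk k) := by
        intro k
        have h1 := Stmt9.mu_le_mul_psiO (μ := μ) hα hc' (hzpowtop (k+1)) (hzpow0 (k+1))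
          (E := Bk k) (fun x hx => hx.2.2) (hψle (hBkB k) (hBkm k))
        rw [hψdef, Stmt9.psiM_apply (hBkm k)]
        exact h1
      have hdown : ∀ k, v ^ k * ψ (Bk k) ≤ μ (Bk k) := by
        intro k
        refine Stmt9.le_of_forall_one_lt_mul fun w hw hwtop => ?_
        have hw0 : w ≠ 0 := (lt_trans zero_lt_one hw).ne'
        have ht0 : v ^ k / w ≠ 0 := (ENNReal.div_pos (hzpow0 k) hwtop).ne'
        have httop : v ^ k / w ≠ ∞ := (ENNReal.div_lt_top (hzpowtop k) hw0).ne
        have hlt : v ^ k / w < v ^ k := by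
          rw [ENNReal.div_lt_iff (Or.inl hw0) (Or.inl hwtop)]
          calc v ^ k = v ^ k * 1 := (mul_one _).symm
            _ < v ^ k * w := by
                rw [ENNReal.mul_lt_mul_iff_right (hzpow0 k) (hzpowtop k)]
                exact hw
        have hest := Stmt9.mul_psiO_le_mu (μ := μ) hα hc' ht0 httop (E := Bk k)
          (fun x hx => lt_of_lt_of_le hlt hx.2.1)
        have heq : v ^ k * ψ (Bk k) = w * (v ^ k / w * ψ (Bk k)) := by
          rw [← mul_assoc, ENNReal.mul_div_cancel' (fun h => absurd h hw0) (fun h => absurd h hwtop)]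
        rw [heq]
        refine mul_le_mul_right ?_ w
        rw [hψdef, Stmt9.psiM_apply (hBkm k)]
        exact hest
      have hmidl : ∀ k, v ^ k * ψ (Bk k) ≤ ∫⁻ x in Bk k, F x ∂ψ := by
        intro k
        rw [← setLIntegral_const (Bk k) (v ^ k)]
        exact setLIntegral_mono' (hBkm k) fun x hx => hx.2.1
      have hmidr : ∀ k, ∫⁻ x in Bk k, F x ∂ψ ≤ v ^ (k + 1) * ψ (Bk k) := by
        intro k
        rw [← setLIntegral_const (Bk k) (v ^ (k + 1))]
        exact setLIntegral_mono' (hBkm k) fun x hx => hx.2.2.le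
      have hμsum : μ P = ∑' k : ℤ, μ (Bk k) := by
        conv_lhs => rw [hPcover]
        exact measure_iUnion hBkdisj hBkm
      have hIsum : I = ∑' k : ℤ, ∫⁻ x in Bk k, F x ∂ψ := by
        rw [hI]
        conv_lhs => rw [hPcover]
        exact lintegral_iUnion hBkm hBkdisj F
      constructor
      · rw [hμsum]
        calc ∑' k : ℤ, μ (Bk k) ≤ ∑' k : ℤ, v * ∫⁻ x in Bk k, F x ∂ψ := by
              refine ENNReal.tsum_le_tsum fun k => ?_
              refine le_trans (hup k) ?_
              rw [hvsucc k]
              calc v ^ k * v * ψ (Bk k) = v * (v ^ k * ψ (Bk k)) := by ring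
                _ ≤ v * ∫⁻ x in Bk k, F x ∂ψ := mul_le_mul_right (hmidl k) v
          _ = v * ∑' k : ℤ, ∫⁻ x in Bk k, F x ∂ψ := ENNReal.tsum_mul_left
          _ = v * I := by rw [← hIsum]
      · rw [hIsum]
        calc ∑' k : ℤ, ∫⁻ x in Bk k, F x ∂ψ ≤ ∑' k : ℤ, v * μ (Bk k) := by
              refine ENNReal.tsum_le_tsum fun k => ?_
              refine le_trans (hmidr k) ?_
              rw [hvsucc k]
              calc v ^ k * v * ψ (Bk k) = v * (v ^ k * ψ (Bk k)) := by ring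
                _ ≤ v * μ (Bk k) := mul_le_mul_right (hdown k) v
          _ = v * ∑' k : ℤ, μ (Bk k) := ENNReal.tsum_mul_left
          _ = v * μ P := by rw [← hμsum]
    refine le_antisymm ?_ ?_
    · exact Stmt9.le_of_forall_one_lt_mul fun v hv hvtop => (main v hv hvtop).1
    · exact Stmt9.le_of_forall_one_lt_mul fun v hv hvtop => (main v hv hvtop).2
  -- put the pieces together
  have hsplit : B = Z0 ∪ Zi ∪ P := by
    ext x
    constructor
    · intro hx
      rcases eq_or_ne (F x) 0 with h0 | h0
      · exact Or.inl (Or.inl ⟨hx, h0⟩)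
      rcases eq_or_ne (F x) ∞ with hi | hi
      · exact Or.inl (Or.inr ⟨hx, hi⟩)
      · exact Or.inr ⟨hx, pos_iff_ne_zero.2 h0, lt_top_iff_ne_top.2 hi⟩
    · rintro ((⟨h, -⟩ | ⟨h, -⟩) | ⟨h, -⟩) <;> exact h
  have hd0 : Disjoint Z0 Zi := by
    refine Set.disjoint_left.2 ?_
    rintro x ⟨-, h1⟩ ⟨-, h2⟩
    have e1 : F x = 0 := h1
    have e2 : F x = ∞ := h2
    rw [e1] at e2
    exact absurd e2 (by simp)
  have hd1 : Disjoint (Z0 ∪ Zi) P := by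
    refine Set.disjoint_left.2 ?_
    rintro x (⟨-, h1⟩ | ⟨-, h1⟩) ⟨-, h2⟩
    · have e1 : F x = 0 := h1
      exact absurd h2.1 (by rw [e1]; simp)
    · have e1 : F x = ∞ := h1
      exact absurd h2.2 (by rw [e1]; simp)
  have hμB : μ B = μ Z0 + μ Zi + μ P := by
    rw [hsplit, measure_union hd1 hPm, measure_union hd0 hZim]
  have hintB : ∫⁻ x in B, F x ∂ψ
      = (∫⁻ x in Z0, F x ∂ψ + ∫⁻ x in Zi, F x ∂ψ) + ∫⁻ x in P, F x ∂ψ := by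
    rw [hsplit, lintegral_union hPm hd1, lintegral_union hZim hd0]
  have hintZ0 : ∫⁻ x in Z0, F x ∂ψ = 0 := by
    rw [setLIntegral_congr_fun_ae hZ0m (ae_of_all _ fun x hx => hx.2)]
    simp
  rw [hμB, hintB, hZ0, hintZ0, hZi, hP]
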